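/- For every integer r ≥ 0, every point (x,y) ∈ ℤ² with d_pc((0,0),(x,y)) ≤ r satisfies |y - x| ≤ r; equivalently, the ball B(O,r) is contained between the lines y = x - r and y = x + r. -/

import Mathlib

def Lp : ℤ × ℤ → ℤ × ℤ := fun p => (-p.1 + 2*p.2 + 1, p.2)
def Lpp : ℤ × ℤ → ℤ × ℤ := fun p => (p.1, 2*p.1 - p.2 + 1)
def Mr : ℤ × ℤ → ℤ × ℤ := fun p => (p.1 + 1, p.2)
def Ml : ℤ × ℤ → ℤ × ℤ := fun p => (p.1 - 1, p.2)
def Mu : ℤ × ℤ → ℤ × ℤ := fun p => (p.1, p.2 + 1)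
def Md : ℤ × ℤ → ℤ × ℤ := fun p => (p.1, p.2 - 1)

def ops : Set ((ℤ × ℤ) → (ℤ × ℤ)) := {Lp, Lpp, Mr, Ml, Mu, Md}

/-- The parabolic-taxicab distance: minimal number of operators from `ops`
needed to map `P` to `Q`. -/
noncomputable def dpc (P Q : ℤ × ℤ) : ℕ :=
  sInf {n | ∃ l : List ((ℤ × ℤ) → (ℤ × ℤ)), l.length = n ∧ (∀ f ∈ l, f ∈ ops) ∧
    l.foldr (fun f p => f p) P = Q}

lemma foldr_rep_Mr (n : ℕ) (P : ℤ × ℤ) :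
    (List.replicate n Mr).foldr (fun f p => f p) P = (P.1 + n, P.2) := by
  induction n with
  | zero => simp
  | succ k ih => simp [List.replicate_succ, ih, Mr]; ring

lemma foldr_rep_Ml (n : ℕ) (P : ℤ × ℤ) :
    (List.replicate n Ml).foldr (fun f p => f p) P = (P.1 - n, P.2) := by
  induction n with
  | zero => simp
  | succ k ih => simp [List.replicate_succ, ih, Ml]; ring

lemma foldr_rep_Mu (n : ℕ) (P : ℤ × ℤ) :
    (List.replicate n Mu).foldr (fun f p => f p) P = (P.1, P.2 + n) := by
  induction n with
  | zero => simp
  | succ k ih => simp [List.replicate_succ, ih, Mu]; ring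

lemma foldr_rep_Md (n : ℕ) (P : ℤ × ℤ) :
    (List.replicate n Md).foldr (fun f p => f p) P = (P.1, P.2 - n) := by
  induction n with
  | zero => simp
  | succ k ih => simp [List.replicate_succ, ih, Md]; ring

lemma reachable (x y : ℤ) :
    ∃ l : List ((ℤ × ℤ) → (ℤ × ℤ)), (∀ f ∈ l, f ∈ ops) ∧
      l.foldr (fun f p => f p) (0, 0) = (x, y) := by
  obtain hx | hx := le_or_gt 0 x <;> obtain hy | hy := le_or_gt 0 y
  · refine ⟨List.replicate x.natAbs Mr ++ List.replicate y.natAbs Mu, ?_, ?_⟩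
    · intro f hf; rcases List.mem_append.1 hf with h | h <;>
        simp_all [List.eq_of_mem_replicate h, ops]
    · rw [List.foldr_append, foldr_rep_Mu, foldr_rep_Mr]
      simp [Int.natAbs_of_nonneg hx, Int.natAbs_of_nonneg hy]
  · refine ⟨List.replicate x.natAbs Mr ++ List.replicate y.natAbs Md, ?_, ?_⟩
    · intro f hf; rcases List.mem_append.1 hf with h | h <;>
        simp_all [List.eq_of_mem_replicate h, ops]
    · rw [List.foldr_append, foldr_rep_Md, foldr_rep_Mr]
      have : (y.natAbs : ℤ) = -y := Int.ofNat_natAbs_of_nonpos hy.le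
      simp [Int.natAbs_of_nonneg hx, this]
  · refine ⟨List.replicate x.natAbs Ml ++ List.replicate y.natAbs Mu, ?_, ?_⟩
    · intro f hf; rcases List.mem_append.1 hf with h | h <;>
        simp_all [List.eq_of_mem_replicate h, ops]
    · rw [List.foldr_append, foldr_rep_Mu, foldr_rep_Ml]
      have : (x.natAbs : ℤ) = -x := Int.ofNat_natAbs_of_nonpos hx.le
      simp [Int.natAbs_of_nonneg hy, this]
  · refine ⟨List.replicate x.natAbs Ml ++ List.replicate y.natAbs Md, ?_, ?_⟩
    · intro f hf; rcases List.mem_append.1 hf with h | h <;>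
        simp_all [List.eq_of_mem_replicate h, ops]
    · rw [List.foldr_append, foldr_rep_Md, foldr_rep_Ml]
      have h1 : (x.natAbs : ℤ) = -x := Int.ofNat_natAbs_of_nonpos hx.le
      have h2 : (y.natAbs : ℤ) = -y := Int.ofNat_natAbs_of_nonpos hy.le
      simp [h1, h2]

lemma diff_bound (l : List ((ℤ × ℤ) → (ℤ × ℤ))) (hl : ∀ f ∈ l, f ∈ ops) (P : ℤ × ℤ) :
    |(l.foldr (fun f p => f p) P).2 - (l.foldr (fun f p => f p) P).1|
      ≤ |P.2 - P.1| + l.length := by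
  induction l with
  | nil => simp
  | cons f t ih =>
    have ht : ∀ g ∈ t, g ∈ ops := fun g hg => hl g (List.mem_cons_of_mem f hg)
    have ihb := ih ht
    set Q := t.foldr (fun f p => f p) P with hQ
    have hstep : |(f Q).2 - (f Q).1| ≤ |Q.2 - Q.1| + 1 := by
      have hf := hl f (List.mem_cons_self (a := f) (l := t))
      simp only [ops, Set.mem_insert_iff, Set.mem_singleton_iff] at hf
      have key : ∀ a : ℤ, |a - 1| ≤ |a| + 1 ∧ |a + 1| ≤ |a| + 1 := by
        intro a
        constructor
        · calc |a - 1| ≤ |a| + |(1:ℤ)| := abs_sub a 1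
            _ = |a| + 1 := by norm_num
        · calc |a + 1| ≤ |a| + |(1:ℤ)| := abs_add_le a 1
            _ = |a| + 1 := by norm_num
      rcases hf with rfl | rfl | rfl | rfl | rfl | rfl
      · simp only [Lp]
        rw [show Q.2 - (-Q.1 + 2*Q.2 + 1) = -(Q.2 - Q.1) - 1 by ring]
        calc |-(Q.2 - Q.1) - 1| ≤ |-(Q.2 - Q.1)| + 1 := (key _).1
          _ = |Q.2 - Q.1| + 1 := by rw [abs_neg]
      · simp only [Lpp]
        rw [show 2*Q.1 - Q.2 + 1 - Q.1 = -(Q.2 - Q.1) + 1 by ring]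
        calc |-(Q.2 - Q.1) + 1| ≤ |-(Q.2 - Q.1)| + 1 := (key _).2
          _ = |Q.2 - Q.1| + 1 := by rw [abs_neg]
      · simp only [Mr]
        rw [show Q.2 - (Q.1 + 1) = (Q.2 - Q.1) - 1 by ring]
        exact (key _).1
      · simp only [Ml]
        rw [show Q.2 - (Q.1 - 1) = (Q.2 - Q.1) + 1 by ring]
        exact (key _).2
      · simp only [Mu]
        rw [show Q.2 + 1 - Q.1 = (Q.2 - Q.1) + 1 by ring]
        exact (key _).2
      · simp only [Md]
        rw [show Q.2 - 1 - Q.1 = (Q.2 - Q.1) - 1 by ring]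
        exact (key _).1
    simp only [List.foldr_cons, List.length_cons]
    push_cast
    calc |(f Q).2 - (f Q).1| ≤ |Q.2 - Q.1| + 1 := hstep
      _ ≤ (|P.2 - P.1| + t.length) + 1 := by linarith
      _ = |P.2 - P.1| + (t.length + 1) := by ring

theorem ball_between_lines (r : ℕ) (x y : ℤ) (h : dpc (0, 0) (x, y) ≤ r) :
    |y - x| ≤ (r : ℤ) := by
  have hne : {n | ∃ l : List ((ℤ × ℤ) → (ℤ × ℤ)), l.length = n ∧ (∀ f ∈ l, f ∈ ops) ∧
      l.foldr (fun f p => f p) (0, 0) = (x, y)}.Nonempty := by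
    obtain ⟨l, hl1, hl2⟩ := reachable x y
    exact ⟨l.length, l, rfl, hl1, hl2⟩
  have hmem := Nat.sInf_mem hne
  obtain ⟨l, hlen, hops, hfold⟩ := hmem
  have := diff_bound l hops (0, 0)
  rw [hfold] at this
  simp only at this
  have hle : (l.length : ℤ) ≤ (r : ℤ) := by
    have : l.length ≤ r := by rw [hlen]; exact h
    exact_mod_cast this
  calc |y - x| ≤ |(0:ℤ) - 0| + l.length := this
    _ = l.length := by simp
    _ ≤ r := hle
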